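/- With H^ess(p) = ∫_{|y|>ρ₀/2} e^{p·y} J(y) dy, there exist constants c₁(J) > 0 and c₂(J) ≥ 0 such that p · DH^ess(p) ≥ c₁(J) (ρ₀|p|/2) e^{ρ₀|p|/2} − c₂(J)|p| for all p ∈ ℝ^N. -/

import Mathlib

open MeasureTheory Real Set Filter
open scoped RealInnerProductSpace

lemma aux_mono (s t : ℝ) (hs : 0 ≤ s) (hst : s ≤ t) : s * Real.exp s ≤ t * Real.exp t :=
  mul_le_mul hst (Real.exp_le_exp.2 hst) (Real.exp_pos s).le (hs.trans hst)

lemma aux_lb (t c : ℝ) (hc : |t| ≤ c) : -c ≤ t * Real.exp t := by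
  rcases le_or_gt 0 t with h | h
  · have h1 := mul_nonneg h (Real.exp_pos t).le
    have h2 : 0 ≤ c := (abs_nonneg t).trans hc
    linarith
  · have he : Real.exp t ≤ 1 := Real.exp_le_one_iff.2 h.le
    have h1 : t ≤ t * Real.exp t := by nlinarith [Real.exp_pos t]
    have : -c ≤ t := by rw [abs_of_neg h] at hc; linarith
    linarith

set_option maxHeartbeats 1000000 in
theorem stmt_4' {N : ℕ} (hN : 0 < N)
    (J : EuclideanSpace ℝ (Fin N) → ℝ) (ρ₀ : ℝ) (hρ₀ : 0 < ρ₀)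
    (hJnn : ∀ y, 0 ≤ J y)
    (hJC1 : ContDiffOn ℝ 1 J {(0 : EuclideanSpace ℝ (Fin N))}ᶜ)
    (hJpos : ∀ y ∈ Metric.ball (0 : EuclideanSpace ℝ (Fin N)) ρ₀ \ {0}, 0 < J y)
    (hexp : ∀ β > (0:ℝ), IntegrableOn (fun y => Real.exp (β * ‖y‖) * J y)
      {y : EuclideanSpace ℝ (Fin N) | ρ₀ / 2 < ‖y‖}) :
    ∃ c₁ > (0:ℝ), ∃ c₂ : ℝ, 0 ≤ c₂ ∧
      ∀ p : EuclideanSpace ℝ (Fin N),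
        c₁ * (ρ₀ * ‖p‖ / 2) * Real.exp (ρ₀ * ‖p‖ / 2) - c₂ * ‖p‖ ≤
          ∫ y in {y : EuclideanSpace ℝ (Fin N) | ρ₀ / 2 < ‖y‖},
            ⟪p, y⟫ * Real.exp ⟪p, y⟫ * J y := by
  set Ω : Set (EuclideanSpace ℝ (Fin N)) := {y | ρ₀ / 2 < ‖y‖} with hΩdef
  have hΩopen : IsOpen Ω := isOpen_lt continuous_const continuous_norm
  have hΩne : ∀ y ∈ Ω, y ≠ (0 : EuclideanSpace ℝ (Fin N)) := by
    intro y hy h0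
    rw [h0] at hy
    simp only [hΩdef, mem_setOf_eq, norm_zero] at hy
    linarith
  have hJcont : ContinuousOn J {(0 : EuclideanSpace ℝ (Fin N))}ᶜ := hJC1.continuousOn
  have hJΩ : ContinuousOn J Ω := hJcont.mono (fun y hy => hΩne y hy)
  have hJmeas : AEStronglyMeasurable J (volume.restrict Ω) :=
    hJΩ.aestronglyMeasurable hΩopen.measurableSet
  have hintJ : IntegrableOn J Ω := by
    refine Integrable.mono (hexp 1 one_pos) hJmeas ?_
    filter_upwards with y
    have h1 : (1:ℝ) ≤ Real.exp (1 * ‖y‖) := by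
      rw [one_mul]; exact Real.one_le_exp (norm_nonneg y)
    rw [Real.norm_eq_abs, Real.norm_eq_abs, abs_of_nonneg (hJnn y),
      abs_of_nonneg (mul_nonneg (Real.exp_pos _).le (hJnn y))]
    nlinarith [hJnn y]
  have hintnJ : IntegrableOn (fun y => ‖y‖ * J y) Ω := by
    refine Integrable.mono (hexp 1 one_pos) ?_ ?_
    · exact (continuous_norm.continuousOn.mul hJΩ).aestronglyMeasurable hΩopen.measurableSet
    filter_upwards with y
    have h1 : ‖y‖ ≤ Real.exp (1 * ‖y‖) := by
      rw [one_mul]; linarith [Real.add_one_le_exp ‖y‖]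
    rw [Real.norm_eq_abs, Real.norm_eq_abs, abs_of_nonneg (mul_nonneg (norm_nonneg y) (hJnn y)),
      abs_of_nonneg (mul_nonneg (Real.exp_pos _).le (hJnn y))]
    nlinarith [hJnn y, norm_nonneg y]
  set C : ℝ := ∫ y in Ω, ‖y‖ * J y with hCdef
  have hC0 : 0 ≤ C := integral_nonneg (fun y => mul_nonneg (norm_nonneg y) (hJnn y))
  -- the unit vector e₁
  set e₁ : EuclideanSpace ℝ (Fin N) := EuclideanSpace.single ⟨0, hN⟩ (1:ℝ) with he₁def
  have he₁ : ‖e₁‖ = 1 := by rw [he₁def, EuclideanSpace.norm_single, norm_one]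
  set y₀ : EuclideanSpace ℝ (Fin N) := (7 * ρ₀ / 10) • e₁ with hy₀def
  have hy₀norm : ‖y₀‖ = 7 * ρ₀ / 10 := by
    rw [hy₀def, norm_smul, he₁, mul_one, Real.norm_eq_abs, abs_of_pos (by linarith)]
  -- compact annulus K
  set K : Set (EuclideanSpace ℝ (Fin N)) :=
    Metric.closedBall 0 (4 * ρ₀ / 5) \ Metric.ball 0 (3 * ρ₀ / 5) with hKdef
  have hKcpt : IsCompact K := (isCompact_closedBall 0 _).diff Metric.isOpen_ball
  have hKmem : ∀ y : EuclideanSpace ℝ (Fin N),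
      y ∈ K ↔ ‖y‖ ≤ 4 * ρ₀ / 5 ∧ 3 * ρ₀ / 5 ≤ ‖y‖ := by
    intro y
    simp only [hKdef, mem_diff, Metric.mem_closedBall, Metric.mem_ball, dist_zero_right, not_lt]
  have hy₀K : y₀ ∈ K := by rw [hKmem, hy₀norm]; constructor <;> linarith
  have hKsub : K ⊆ Metric.ball (0 : EuclideanSpace ℝ (Fin N)) ρ₀ \ {0} := by
    intro y hy
    rw [hKmem] at hy
    refine ⟨?_, ?_⟩
    · rw [Metric.mem_ball, dist_zero_right]; linarith [hy.1]
    · simp only [mem_singleton_iff]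
      intro h0; rw [h0, norm_zero] at hy; linarith [hy.2]
  obtain ⟨z, hzK, hzmin⟩ := hKcpt.exists_isMinOn ⟨y₀, hy₀K⟩
    (hJcont.mono (fun y hy => (hKsub hy).2))
  have hm : 0 < J z := hJpos z (hKsub hzK)
  -- the cap T v
  set T : EuclideanSpace ℝ (Fin N) → Set (EuclideanSpace ℝ (Fin N)) := fun v =>
    {y | ρ₀ / 2 < ⟪v, y⟫} ∩ (Metric.ball 0 (4 * ρ₀ / 5) \ Metric.closedBall 0 (3 * ρ₀ / 5))
    with hTdef
  have hTopen : ∀ v, IsOpen (T v) := fun v =>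
    (isOpen_lt continuous_const (Continuous.inner continuous_const continuous_id))
      |>.inter (Metric.isOpen_ball.sdiff Metric.isClosed_closedBall)
  have hTmem : ∀ v y, y ∈ T v ↔ ρ₀ / 2 < ⟪v, y⟫ ∧ ‖y‖ < 4 * ρ₀ / 5 ∧ 3 * ρ₀ / 5 < ‖y‖ := by
    intro v y
    simp only [hTdef, mem_inter_iff, mem_setOf_eq, mem_diff, Metric.mem_ball,
      Metric.mem_closedBall, dist_zero_right, not_le, and_assoc]
  have hTK : ∀ v, T v ⊆ K := by
    intro v y hy
    rw [hTmem] at hy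
    rw [hKmem]
    exact ⟨hy.2.1.le, hy.2.2.le⟩
  have hTΩ : ∀ v, T v ⊆ Ω := by
    intro v y hy
    rw [hTmem] at hy
    simp only [hΩdef, mem_setOf_eq]
    linarith [hy.2.2]
  -- y₀ ∈ T v for any unit v?? No: y₀ ∈ T e₁.
  have hy₀T : y₀ ∈ T e₁ := by
    rw [hTmem]
    refine ⟨?_, by rw [hy₀norm]; linarith, by rw [hy₀norm]; linarith⟩
    rw [hy₀def, real_inner_smul_right, real_inner_self_eq_norm_sq, he₁]
    nlinarith
  -- volume of T e₁
  have hTfin : ∀ v, volume (T v) < ⊤ := by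
    intro v
    refine lt_of_le_of_lt (measure_mono ?_) (measure_ball_lt_top (x := (0 : EuclideanSpace ℝ (Fin N))) (r := 4 * ρ₀ / 5))
    intro y hy
    rw [Metric.mem_ball, dist_zero_right]
    exact ((hTmem v y).1 hy).2.1
  have hTpos : 0 < volume (T e₁) := (hTopen e₁).measure_pos volume ⟨y₀, hy₀T⟩
  -- rotation invariance
  have hTvol : ∀ v : EuclideanSpace ℝ (Fin N), ‖v‖ = 1 → volume (T v) = volume (T e₁) := by
    intro v hv
    set R := Submodule.reflection (ℝ ∙ (e₁ - v))ᗮ with hRdef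
    have hRe : R e₁ = v := Submodule.reflection_sub (by rw [he₁, hv])
    have hpre : R ⁻¹' (T v) = T e₁ := by
      ext y
      rw [mem_preimage, hTmem, hTmem]
      have h1 : ⟪v, R y⟫ = ⟪e₁, y⟫ := by
        rw [← hRe]
        exact R.inner_map_map e₁ y
      rw [h1, R.norm_map]
    calc volume (T v) = volume (R ⁻¹' (T v)) :=
          (R.measurePreserving.measure_preimage (hTopen v).measurableSet.nullMeasurableSet).symm
      _ = volume (T e₁) := by rw [hpre]
  set V : ℝ := (volume (T e₁)).toReal with hVdef
  have hV : 0 < V := ENNReal.toReal_pos hTpos.ne' (hTfin e₁).ne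
  refine ⟨J z * V, mul_pos hm hV, C, hC0, ?_⟩
  intro p
  rcases eq_or_ne p 0 with hp | hp
  · simp [hp]
  have hpn : (0:ℝ) < ‖p‖ := norm_pos_iff.2 hp
  set v := ‖p‖⁻¹ • p with hvdef
  have hv : ‖v‖ = 1 := norm_smul_inv_norm hp
  have hpv : p = ‖p‖ • v := by rw [hvdef, smul_smul, mul_inv_cancel₀ hpn.ne', one_smul]
  set a : ℝ := ρ₀ * ‖p‖ / 2 with hadef
  have ha : 0 ≤ a := by positivity
  set f : EuclideanSpace ℝ (Fin N) → ℝ := fun y => ⟪p, y⟫ * Real.exp ⟪p, y⟫ * J y with hfdef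
  have hfmeas : AEStronglyMeasurable f (volume.restrict Ω) := by
    apply ContinuousOn.aestronglyMeasurable _ hΩopen.measurableSet
    exact ((Continuous.inner continuous_const continuous_id).mul
      (Real.continuous_exp.comp (Continuous.inner continuous_const continuous_id))).continuousOn.mul hJΩ
  have hfint : IntegrableOn f Ω := by
    refine Integrable.mono (hexp (2*‖p‖+1) (by positivity)) hfmeas ?_
    filter_upwards with y
    rw [Real.norm_eq_abs, Real.norm_eq_abs,
      abs_of_nonneg (mul_nonneg (Real.exp_pos _).le (hJnn y))]
    have h1 : |⟪p,y⟫| ≤ ‖p‖ * ‖y‖ := abs_real_inner_le_norm p y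
    have h2 : Real.exp ⟪p,y⟫ ≤ Real.exp (‖p‖*‖y‖) :=
      Real.exp_le_exp.2 (le_trans (le_abs_self _) h1)
    have h3 : ‖p‖*‖y‖ ≤ Real.exp (‖p‖*‖y‖) := by linarith [Real.add_one_le_exp (‖p‖*‖y‖)]
    calc |⟪p,y⟫ * Real.exp ⟪p,y⟫ * J y| = |⟪p,y⟫| * Real.exp ⟪p,y⟫ * J y := by
          rw [abs_mul, abs_mul, abs_of_nonneg (Real.exp_pos ⟪p,y⟫).le, abs_of_nonneg (hJnn y)]
      _ ≤ (Real.exp (‖p‖*‖y‖) * Real.exp (‖p‖*‖y‖)) * J y := by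
          apply mul_le_mul_of_nonneg_right _ (hJnn y)
          exact mul_le_mul (h1.trans h3) h2 (Real.exp_pos _).le (Real.exp_pos _).le
      _ ≤ Real.exp ((2*‖p‖+1) * ‖y‖) * J y := by
          apply mul_le_mul_of_nonneg_right _ (hJnn y)
          rw [← Real.exp_add]
          apply Real.exp_le_exp.2
          nlinarith [norm_nonneg y]
  set g : EuclideanSpace ℝ (Fin N) → ℝ := fun y =>
    (a * Real.exp a) * (T v).indicator J y - ‖p‖ * (‖y‖ * J y) with hgdef
  have hgint : IntegrableOn g Ω :=
    ((hintJ.indicator (hTopen v).measurableSet).const_mul _).sub (hintnJ.const_mul _)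
  have hle : ∀ y ∈ Ω, g y ≤ f y := by
    intro y hy
    by_cases hyT : y ∈ T v
    · simp only [hgdef, hfdef, indicator_of_mem hyT]
      have ht : a ≤ ⟪p,y⟫ := by
        rw [hpv, real_inner_smul_left]
        have h4 := ((hTmem v y).1 hyT).1
        calc a = ‖p‖*(ρ₀/2) := by rw [hadef]; ring
          _ ≤ ‖p‖ * ⟪v,y⟫ := by nlinarith
      have h5 := aux_mono a ⟪p,y⟫ ha ht
      have h6 : (a*Real.exp a) * J y ≤ ⟪p,y⟫*Real.exp ⟪p,y⟫ * J y :=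
        mul_le_mul_of_nonneg_right h5 (hJnn y)
      have hnn : (0:ℝ) ≤ ‖p‖*(‖y‖*J y) := mul_nonneg hpn.le (mul_nonneg (norm_nonneg y) (hJnn y))
      linarith
    · simp only [hgdef, hfdef, indicator_of_notMem hyT]
      have h1 : |⟪p,y⟫| ≤ ‖p‖*‖y‖ := abs_real_inner_le_norm p y
      have h5 := aux_lb ⟪p,y⟫ (‖p‖*‖y‖) h1
      have h6 : (-(‖p‖*‖y‖)) * J y ≤ (⟪p,y⟫ * Real.exp ⟪p,y⟫) * J y :=
        mul_le_mul_of_nonneg_right h5 (hJnn y)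
      have : (a*Real.exp a) * 0 - ‖p‖*(‖y‖*J y) = (-(‖p‖*‖y‖)) * J y := by ring
      rw [this]
      linarith
  have hmain : ∫ y in Ω, g y ≤ ∫ y in Ω, f y :=
    setIntegral_mono_on hgint hfint hΩopen.measurableSet hle
  have hgval : (∫ y in Ω, g y) = (a*Real.exp a) * (∫ y in T v, J y) - ‖p‖ * C := by
    simp only [hgdef]
    rw [integral_sub ((hintJ.indicator (hTopen v).measurableSet).const_mul _)
      (hintnJ.const_mul _), integral_const_mul, integral_const_mul]
    congr 2
    rw [setIntegral_indicator (hTopen v).measurableSet,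
      inter_eq_self_of_subset_right (hTΩ v)]
  have hTJ : J z * V ≤ ∫ y in T v, J y := by
    have h1 : J z * (volume (T v)).toReal ≤ ∫ y in T v, J y :=
      setIntegral_ge_of_const_le_real (hTopen v).measurableSet (hTfin v).ne
        (fun y hy => isMinOn_iff.1 hzmin y (hTK v hy)) (hintJ.mono_set (hTΩ v))
    rwa [hTvol v hv, ← hVdef] at h1
  have haexp : (0:ℝ) ≤ a * Real.exp a := mul_nonneg ha (Real.exp_pos a).le
  calc (J z * V) * a * Real.exp a - C * ‖p‖
      = (a*Real.exp a) * (J z * V) - ‖p‖ * C := by ring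
    _ ≤ (a*Real.exp a) * (∫ y in T v, J y) - ‖p‖ * C := by
        have := mul_le_mul_of_nonneg_left hTJ haexp
        linarith
    _ = ∫ y in Ω, g y := hgval.symm
    _ ≤ ∫ y in Ω, f y := hmain


/-- `p · DH^ess(p) = ∫_{‖y‖>ρ₀/2} (p·y) e^{p·y} J(y) dy
  ≥ c₁(J) (ρ₀‖p‖/2) e^{ρ₀‖p‖/2} − c₂(J)‖p‖`. -/
theorem stmt_4 {N : ℕ}
    (J : EuclideanSpace ℝ (Fin N) → ℝ) (ρ₀ : ℝ) (hρ₀ : 0 < ρ₀)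
    (hJnn : ∀ y, 0 ≤ J y)
    (hJC1 : ContDiffOn ℝ 1 J {(0 : EuclideanSpace ℝ (Fin N))}ᶜ)
    (hJpos : ∀ y ∈ Metric.ball (0 : EuclideanSpace ℝ (Fin N)) ρ₀ \ {0}, 0 < J y)
    (hsupp : Metric.ball (0 : EuclideanSpace ℝ (Fin N)) ρ₀ ⊆ Function.support J)
    (hint : Integrable (fun y => min 1 (‖y‖ ^ 2) * J y))
    (hexp : ∀ β > (0:ℝ), IntegrableOn (fun y => Real.exp (β * ‖y‖) * J y)
      {y : EuclideanSpace ℝ (Fin N) | ρ₀ / 2 < ‖y‖}) :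
    ∃ c₁ > (0:ℝ), ∃ c₂ : ℝ, 0 ≤ c₂ ∧
      ∀ p : EuclideanSpace ℝ (Fin N),
        c₁ * (ρ₀ * ‖p‖ / 2) * Real.exp (ρ₀ * ‖p‖ / 2) - c₂ * ‖p‖ ≤
          ∫ y in {y : EuclideanSpace ℝ (Fin N) | ρ₀ / 2 < ‖y‖},
            ⟪p, y⟫ * Real.exp ⟪p, y⟫ * J y := by
  rcases Nat.eq_zero_or_pos N with hN | hN
  · refine ⟨1, one_pos, 0, le_refl 0, ?_⟩
    intro p
    subst hN
    haveI : Subsingleton (EuclideanSpace ℝ (Fin 0)) :=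
      ⟨fun a b => by ext i; exact Fin.elim0 i⟩
    have hp : p = 0 := Subsingleton.elim p 0
    simp [hp]
  · exact stmt_4' hN J ρ₀ hρ₀ hJnn hJC1 hJpos hexp
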